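/- Any outcome W that satisfies Inclusion PSC (IPSC) is exhaustive, i.e., w(W) ≤ L and for every candidate c ∈ C \ W, w(W ∪ {c}) > L. -/
import Mathlib


open Finset
open scoped Classical

noncomputable section

/-- Each voter's weak preference relation `pref i` is a total preorder. -/
def TotalPreorder {V C : Type} (pref : V → C → C → Prop) : Prop :=
  (∀ i a b, pref i a b ∨ pref i b a) ∧
  (∀ i a b c, pref i a b → pref i b c → pref i a c)

/-- `nth i j` is voter `i`'s `(j+1)`-th most preferred candidate under a fixed
tie-breaking: an enumeration of all candidates consistent with `pref i`. -/
def TieBreak {V C : Type} [Fintype C] (pref : V → C → C → Prop) (nth : V → ℕ → C) : Prop :=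
  (∀ i c, ∃ j, j < Fintype.card C ∧ nth i j = c) ∧
  (∀ i j j', j ≤ j' → pref i (nth i j) (nth i j'))

/-- `N'` solidly supports `C'`: every voter in `N'` weakly prefers every member of `C'`
to every non-member. -/
def Solid {V C : Type} (pref : V → C → C → Prop) (N' : Finset V) (C' : Finset C) : Prop :=
  ∀ i ∈ N', ∀ c' ∈ C', ∀ c, c ∉ C' → pref i c' c

/-- `P(N',C') = {c : ∃ i ∈ N', c ≿_i c^{(i,|C'|)}}` where `c^{(i,j)} = nth i (j-1)`. -/
def Pset {V C : Type} [Fintype C] (pref : V → C → C → Prop) (nth : V → ℕ → C)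
    (N' : Finset V) (C' : Finset C) : Finset C :=
  Finset.univ.filter fun c => ∃ i ∈ N', pref i c (nth i (C'.card - 1))

/-- total cost of a set of candidates -/
def cost {C : Type} (w : C → ℝ) (S : Finset C) : ℝ := ∑ c ∈ S, w c

/-- Comparative PSC for PB with general (weak) preferences. -/
def CPSC {V C : Type} [Fintype V] [Fintype C] (pref : V → C → C → Prop) (nth : V → ℕ → C)
    (b : V → ℝ) (w : C → ℝ) (L : ℝ) (W : Finset C) : Prop :=
  ¬ ∃ (N' : Finset V) (C' : Finset C), Solid pref N' C' ∧
      cost w (Pset pref nth N' C' ∩ W) < (∑ i ∈ N', b i) * L / (Fintype.card V : ℝ) ∧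
      ∃ C'' ⊆ C', cost w (Pset pref nth N' C' ∩ W) < cost w C'' ∧
        cost w C'' ≤ (∑ i ∈ N', b i) * L / (Fintype.card V : ℝ)

/-- Inclusion PSC for PB with general (weak) preferences. -/
def IPSC {V C : Type} [Fintype V] [Fintype C] (pref : V → C → C → Prop) (nth : V → ℕ → C)
    (b : V → ℝ) (w : C → ℝ) (L : ℝ) (W : Finset C) : Prop :=
  ¬ ∃ (N' : Finset V) (C' : Finset C), Solid pref N' C' ∧
      cost w (Pset pref nth N' C' ∩ W) < (∑ i ∈ N', b i) * L / (Fintype.card V : ℝ) ∧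
      ∃ c ∈ C', c ∉ Pset pref nth N' C' ∩ W ∧
        cost w (insert c (Pset pref nth N' C' ∩ W)) ≤ (∑ i ∈ N', b i) * L / (Fintype.card V : ℝ)

/-- `W` is exhaustive w.r.t. budget limit `L`. -/
def Exhaustive {C : Type} (w : C → ℝ) (L : ℝ) (W : Finset C) : Prop :=
  cost w W ≤ L ∧ ∀ c, c ∉ W → L < cost w (insert c W)

/-- `W` is a maximal cost outcome w.r.t. budget limit `L`. -/
def MaximalCost {C : Type} (w : C → ℝ) (L : ℝ) (W : Finset C) : Prop :=
  cost w W ≤ L ∧ ∀ C' : Finset C, cost w C' ≤ L → cost w C' ≤ cost w W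

/-- dichotomous preferences with approval sets `A i` -/
def Dichotomous {V C : Type} (pref : V → C → C → Prop) (A : V → Finset C) : Prop :=
  ∀ i a c, pref i a c ↔ (a ∈ A i ∨ c ∉ A i)

/-- `⋃_{i ∈ N'} A i` -/
def unionA {V C : Type} [Fintype C] (A : V → Finset C) (N' : Finset V) : Finset C :=
  Finset.univ.filter fun c => ∃ i ∈ N', c ∈ A i

/-- `⋂_{i ∈ N'} A i` -/
def interA {V C : Type} [Fintype C] (A : V → Finset C) (N' : Finset V) : Finset C :=
  Finset.univ.filter fun c => ∀ i ∈ N', c ∈ A i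

/-- Any outcome satisfying IPSC is exhaustive. -/
theorem ipsc_implies_exhaustive {V C : Type} [Fintype V] [Fintype C] [Nonempty V]
    (pref : V → C → C → Prop) (nth : V → ℕ → C) (b : V → ℝ) (w : C → ℝ) (L : ℝ)
    (hpref : TotalPreorder pref) (hnth : TieBreak pref nth)
    (hb : ∀ i, 0 < b i) (hbsum : (∑ i, b i) = (Fintype.card V : ℝ))
    (hw : ∀ c, 0 < w c) (hL : 0 < L)
    (W : Finset C) (hWL : cost w W ≤ L)
    (hIPSC : IPSC pref nth b w L W) :
    Exhaustive w L W := by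
  refine ⟨hWL, fun c hc => ?_⟩
  by_contra hlt
  push_neg at hlt
  apply hIPSC
  have hcardV : (0 : ℝ) < (Fintype.card V : ℝ) := by
    exact_mod_cast Fintype.card_pos
  have hC : Nonempty C := ⟨c⟩
  -- Pset for N' = univ, C' = univ is univ
  have hP : Pset pref nth (Finset.univ : Finset V) (Finset.univ : Finset C) = Finset.univ := by
    ext d
    simp only [Pset, mem_filter, mem_univ, true_and, iff_true, exists_prop]
    obtain ⟨i⟩ := ‹Nonempty V›
    obtain ⟨j, hj, hje⟩ := hnth.1 i d
    refine ⟨i, ?_⟩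
    rw [← hje, Finset.card_univ]
    exact hnth.2 i j (Fintype.card C - 1) (Nat.le_sub_one_of_lt hj)
  have hPW : Pset pref nth (Finset.univ : Finset V) (Finset.univ : Finset C) ∩ W = W := by
    rw [hP, Finset.univ_inter]
  have hbound : (∑ i ∈ (Finset.univ : Finset V), b i) * L / (Fintype.card V : ℝ) = L := by
    rw [hbsum]; field_simp
  refine ⟨Finset.univ, Finset.univ, ?_, ?_, c, mem_univ c, ?_, ?_⟩
  · intro i _ c' _ d hd; exact absurd (mem_univ d) hd
  · rw [hPW, hbound]
    have : cost w (insert c W) = w c + cost w W := by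
      unfold cost; rw [Finset.sum_insert hc]
    linarith [hw c]
  · rw [hPW]; exact hc
  · rw [hPW, hbound]; exact hlt
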